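/- If a binary vector x̄ is a feasible solution to the real-valued relaxation (Σ_k Σ_{j∈D_k, t∈T_j} |s_{k,j}| x̄_{k,j} ≤ C_t for all t, and at most one j per user k has x̄_{k,j} = 1) with utility u(x̄) ≥ ψ · OPT*_{bag}, where OPT*_{bag} is the LP optimum of the real-valued problem, and all demands s_{k,j} are complex numbers with arguments in [0, φ] for φ ≤ π/2, then x̄ is feasible for the complex-demand scheduling problem and u(x̄) ≥ ψ · cos(φ/2) · OPT, where OPT is the integer optimum of the complex-demand problem. -/

import Mathlib

lemma key_pointwise (φ : ℝ) (hφ : φ ≤ Real.pi / 2) (s : ℂ)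
    (h0 : 0 ≤ s.arg) (h1 : s.arg ≤ φ) :
    Real.cos (φ / 2) * ‖s‖ ≤
      s.re * Real.cos (φ / 2) + s.im * Real.sin (φ / 2) := by
  rcases eq_or_ne s 0 with rfl | hs
  · simp
  · have habs : (0:ℝ) < ‖s‖ := norm_pos_iff.mpr hs
    have hre : s.re = ‖s‖ * Real.cos s.arg := by
      rw [Complex.cos_arg hs]; field_simp
    have him : s.im = ‖s‖ * Real.sin s.arg := by
      rw [Complex.sin_arg]; field_simp
    rw [hre, him]
    have hcs : s.re * Real.cos (φ/2) + s.im * Real.sin (φ/2)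
        = ‖s‖ * Real.cos (s.arg - φ/2) := by
      rw [hre, him, Real.cos_sub]; ring
    have h2 : Real.cos (φ/2) ≤ Real.cos (s.arg - φ/2) := by
      have hb : |s.arg - φ/2| ≤ φ/2 := by
        rw [abs_le]; constructor <;> linarith
      have := Real.cos_le_cos_of_nonneg_of_le_pi (abs_nonneg (s.arg - φ/2))
        (by linarith [Real.pi_pos]) hb
      rwa [Real.cos_abs] at this
    calc Real.cos (φ/2) * ‖s‖
        ≤ Real.cos (s.arg - φ/2) * ‖s‖ := by
          exact mul_le_mul_of_nonneg_right h2 habs.le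
      _ = ‖s‖ * Real.cos s.arg * Real.cos (φ/2)
          + ‖s‖ * Real.sin s.arg * Real.sin (φ/2) := by
          rw [Real.cos_sub]; ring

theorem bag_ufp_reduction (n m N : ℕ) (user : Fin N → Fin n) (s : Fin N → ℂ)
    (u : Fin N → ℝ) (T : Fin N → Finset (Fin m)) (C : Fin m → ℝ) (φ ψ : ℝ)
    (hu : ∀ j, 0 < u j)
    (hφ0 : 0 ≤ φ) (hφ : φ ≤ Real.pi / 2)
    (harg : ∀ j, 0 ≤ (s j).arg ∧ (s j).arg ≤ φ)
    (hψ : 0 ≤ ψ ∧ ψ ≤ 1)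
    (xb : Fin N → ℝ)
    (hbin : ∀ j, xb j = 0 ∨ xb j = 1)
    (hbag : ∀ k, ∑ j ∈ Finset.univ.filter (fun j => user j = k), xb j ≤ 1)
    (hreal : ∀ t, ∑ j ∈ Finset.univ.filter (fun j => t ∈ T j),
        ‖s j‖ * xb j ≤ C t)
    (hopt : ∀ y : Fin N → ℝ,
        (∀ j, 0 ≤ y j ∧ y j ≤ 1) →
        (∀ k, ∑ j ∈ Finset.univ.filter (fun j => user j = k), y j ≤ 1) →
        (∀ t, ∑ j ∈ Finset.univ.filter (fun j => t ∈ T j),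
            ‖s j‖ * y j ≤ C t) →
        ψ * (∑ j, u j * y j) ≤ ∑ j, u j * xb j) :
    (∀ t, ‖∑ j ∈ Finset.univ.filter (fun j => t ∈ T j),
        (xb j : ℂ) * s j‖ ≤ C t) ∧
    (∀ z : Fin N → ℝ,
        (∀ j, z j = 0 ∨ z j = 1) →
        (∀ k, ∑ j ∈ Finset.univ.filter (fun j => user j = k), z j ≤ 1) →
        (∀ t, ‖∑ j ∈ Finset.univ.filter (fun j => t ∈ T j),
            (z j : ℂ) * s j‖ ≤ C t) →
        ψ * Real.cos (φ / 2) * (∑ j, u j * z j) ≤ ∑ j, u j * xb j) := by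
  have hxb0 : ∀ j, 0 ≤ xb j := fun j => by rcases hbin j with h | h <;> simp [h]
  set c := Real.cos (φ/2) with hc
  have hc0 : 0 ≤ c := Real.cos_nonneg_of_mem_Icc ⟨by linarith [Real.pi_pos], by linarith⟩
  have hc1 : c ≤ 1 := Real.cos_le_one _
  constructor
  · intro t
    calc ‖∑ j ∈ Finset.univ.filter (fun j => t ∈ T j), (xb j : ℂ) * s j‖
        ≤ ∑ j ∈ Finset.univ.filter (fun j => t ∈ T j), ‖(xb j : ℂ) * s j‖ :=
          norm_sum_le _ _
      _ = ∑ j ∈ Finset.univ.filter (fun j => t ∈ T j), ‖s j‖ * xb j := by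
          refine Finset.sum_congr rfl fun j _ => ?_
          rw [norm_mul, Complex.norm_real, Real.norm_eq_abs, abs_of_nonneg (hxb0 j)]; ring
      _ ≤ C t := hreal t
  · intro z hzbin hzbag hzC
    have hz0 : ∀ j, 0 ≤ z j := fun j => by rcases hzbin j with h | h <;> simp [h]
    have hz1 : ∀ j, z j ≤ 1 := fun j => by rcases hzbin j with h | h <;> simp [h]
    set y : Fin N → ℝ := fun j => c * z j with hy
    have h1 : ∀ j, 0 ≤ y j ∧ y j ≤ 1 := fun j =>
      ⟨mul_nonneg hc0 (hz0 j), by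
        calc c * z j ≤ 1 * 1 := mul_le_mul hc1 (hz1 j) (hz0 j) one_pos.le
          _ = 1 := by ring⟩
    have h2 : ∀ k, ∑ j ∈ Finset.univ.filter (fun j => user j = k), y j ≤ 1 := by
      intro k
      have : ∑ j ∈ Finset.univ.filter (fun j => user j = k), y j
          = c * ∑ j ∈ Finset.univ.filter (fun j => user j = k), z j := by
        rw [Finset.mul_sum]
      rw [this]
      calc c * ∑ j ∈ Finset.univ.filter (fun j => user j = k), z j
          ≤ 1 * 1 := by
            refine mul_le_mul hc1 (hzbag k) ?_ one_pos.le
            exact Finset.sum_nonneg fun j _ => hz0 j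
        _ = 1 := by ring
    have h3 : ∀ t, ∑ j ∈ Finset.univ.filter (fun j => t ∈ T j),
        ‖s j‖ * y j ≤ C t := by
      intro t
      set F := Finset.univ.filter (fun j : Fin N => t ∈ T j) with hF
      set w : ℂ := ∑ j ∈ F, (z j : ℂ) * s j with hw
      have hwre : w.re = ∑ j ∈ F, z j * (s j).re := by
        rw [hw, Complex.re_sum]
        exact Finset.sum_congr rfl fun j _ => by simp [Complex.mul_re]
      have hwim : w.im = ∑ j ∈ F, z j * (s j).im := by
        rw [hw, Complex.im_sum]
        exact Finset.sum_congr rfl fun j _ => by simp [Complex.mul_im]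
      have step1 : ∑ j ∈ F, ‖s j‖ * y j
          ≤ w.re * c + w.im * Real.sin (φ/2) := by
        rw [hwre, hwim, Finset.sum_mul, Finset.sum_mul, ← Finset.sum_add_distrib]
        refine Finset.sum_le_sum fun j _ => ?_
        have := key_pointwise φ hφ (s j) (harg j).1 (harg j).2
        have hzj := hz0 j
        calc ‖s j‖ * y j = z j * (c * ‖s j‖) := by
              rw [hy]; ring
          _ ≤ z j * ((s j).re * c + (s j).im * Real.sin (φ/2)) :=
              mul_le_mul_of_nonneg_left this hzj
          _ = z j * (s j).re * c + z j * (s j).im * Real.sin (φ/2) := by ring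
      have step2 : w.re * c + w.im * Real.sin (φ/2) ≤ ‖w‖ := by
        have hpy : Real.sin (φ/2)^2 + c^2 = 1 := by
          rw [hc]; exact Real.sin_sq_add_cos_sq _
        have hA : (‖w‖)^2 = w.re^2 + w.im^2 := by
          rw [Complex.sq_norm, Complex.normSq_apply]; ring
        have hsq : (w.re * c + w.im * Real.sin (φ/2))^2 ≤ (‖w‖)^2 := by
          nlinarith [sq_nonneg (w.re * Real.sin (φ/2) - w.im * c), hpy, hA]
        exact le_of_pow_le_pow_left₀ two_ne_zero (norm_nonneg w) hsq
      exact step1.trans (step2.trans (hzC t))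
    have := hopt y h1 h2 h3
    have hsum : ∑ j, u j * y j = c * ∑ j, u j * z j := by
      rw [Finset.mul_sum]; exact Finset.sum_congr rfl fun j _ => by rw [hy]; ring
    rw [hsum] at this
    calc ψ * c * (∑ j, u j * z j) = ψ * (c * ∑ j, u j * z j) := by ring
      _ ≤ ∑ j, u j * xb j := this
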